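/- Let R be a ring with identity, a, b, c ∈ R and j_a, j_b, j_c ∈ J(R). Suppose the (b,c)-inverse a^{‖(b,c)} of a exists, and let b⁺ and c⁺ be reflexive inverses of b and c respectively (these exist since b and c are regular). Then the following are equivalent: (1) the (b + j_b, c + j_c)-inverse of a + j_a exists; (2) b + j_b and c + j_c are regular; (3) (1 − b·b⁺)·j_b·(1 + b⁺·j_b)⁻¹·(1 − b⁺·b) = 0 and (1 − c·c⁺)·j_c·(1 + c⁺·j_c)⁻¹·(1 − c⁺·c) = 0 (where 1 + b⁺·j_b and 1 + c⁺·j_c are units because j_b, j_c ∈ J(R)). -/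

import Mathlib

/-- `y` is the (b,c)-inverse of `a`: `c*a*y = c`, `y*a*b = b`, `y ∈ bR ∩ Rc`. -/
def IsBCInverse {R : Type*} [Ring R] (a b c y : R) : Prop :=
  c * a * y = c ∧ y * a * b = b ∧ (∃ s, y = b * s) ∧ (∃ t, y = t * c)

section BCAux
variable {R : Type*} [Ring R]

local notation "𝕁" => Ideal.jacobson (⊥ : Ideal R)

lemma jac_mul_right {x : R} (r : R) (hx : x ∈ 𝕁) : x * r ∈ 𝕁 :=
  Ideal.mul_mem_right r _ hx

lemma jac_mul_left {x : R} (r : R) (hx : x ∈ 𝕁) : r * x ∈ 𝕁 := Ideal.mul_mem_left _ r hx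

lemma jac_left_inv {x : R} (hx : x ∈ 𝕁) : ∃ z, z * (1 + x) = 1 := by
  obtain ⟨z, hz⟩ := Ideal.mem_jacobson_iff.1 hx 1
  rw [Ideal.mem_bot] at hz
  refine ⟨z, ?_⟩
  have h : z * (1 + x) - 1 = z * 1 * x + z - 1 := by noncomm_ring
  rw [hz] at h
  exact sub_eq_zero.mp h

lemma jac_unit {x : R} (hx : x ∈ 𝕁) : ∃ z, (1 + x) * z = 1 ∧ z * (1 + x) = 1 := by
  obtain ⟨z, hz⟩ := jac_left_inv hx
  have hz1 : z - 1 ∈ 𝕁 := by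
    have h : z - 1 = -(z * x) := by
      have h2 : z * (1 + x) = z + z * x := by noncomm_ring
      rw [h2] at hz
      rw [← hz]; noncomm_ring
    rw [h]; exact neg_mem (jac_mul_left z hx)
  obtain ⟨w, hw⟩ := jac_left_inv hz1
  have hzz : (1 : R) + (z - 1) = z := by abel
  rw [hzz] at hw
  have hwx : w = 1 + x := by
    calc w = w * (z * (1 + x)) := by rw [hz, mul_one]
    _ = (w * z) * (1 + x) := by rw [mul_assoc]
    _ = 1 + x := by rw [hw, one_mul]
  exact ⟨z, by rw [← hwx]; exact hw, hz⟩

lemma jac_isUnit {x : R} (hx : x ∈ 𝕁) : IsUnit (1 + x) := by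
  obtain ⟨z, h1, h2⟩ := jac_unit hx
  exact ⟨⟨1 + x, z, h1, h2⟩, rfl⟩

lemma regA {b bp w : R} (h1 : b * bp * b = b) (h2 : bp * b * bp = bp)
    (hfw : b * bp * w = b) (hk : w - b ∈ 𝕁) :
    (∃ x, w * x * w = w) ↔ (1 - b * bp) * w * (1 - bp * b) = 0 := by
  have hwg : w * bp * b = w * bp * w := by
    calc w * bp * b = w * bp * (b * bp * w) := by rw [hfw]
    _ = w * (bp * b * bp) * w := by noncomm_ring
    _ = w * bp * w := by rw [h2]
  have key : (1 - b * bp) * w * (1 - bp * b) = w - w * bp * w := by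
    have expand : (1 - b * bp) * w * (1 - bp * b)
        = w - (b * bp * w) - w * bp * b + (b * bp * w) * (bp * b) := by noncomm_ring
    rw [expand, hfw, hwg]
    have hb : b * (bp * b) = b := by rw [← mul_assoc, h1]
    rw [hb]
    abel
  rw [key]
  constructor
  · rintro ⟨x, hx⟩
    set e := w - w * bp * w with he_eq
    have heJ : e ∈ 𝕁 := by
      have hfb : (1 - b * bp) * b = 0 := by
        have h : (1 - b * bp) * b = b - b * bp * b := by noncomm_ring
        rw [h, h1, sub_self]
      have hd : e = (1 - b * bp) * ((w - b) * (1 - bp * b)) := by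
        have h : (1 - b * bp) * ((w - b) * (1 - bp * b))
            = (1 - b * bp) * w * (1 - bp * b) - ((1 - b * bp) * b) * (1 - bp * b) := by
          noncomm_ring
        rw [h, hfb, zero_mul, sub_zero, key]
      rw [hd]
      exact jac_mul_left _ (jac_mul_right _ hk)
    have hexw : e * x * w = e := by
      have h : e * x * w = w * x * w - w * bp * (w * x * w) := by rw [he_eq]; noncomm_ring
      rw [hx] at h
      rw [h, he_eq]
    have hebp : e * bp = 0 := by
      have hwbpb : w * bp * w * bp = w * bp := by
        rw [← hwg]
        calc w * bp * b * bp = w * (bp * b * bp) := by noncomm_ring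
        _ = w * bp := by rw [h2]
      have h : e * bp = w * bp - w * bp * w * bp := by rw [he_eq]; noncomm_ring
      rw [h, hwbpb, sub_self]
    have hee : e = e * x * e := by
      have hw' : w = w * bp * w + e := by rw [he_eq]; abel
      calc e = e * x * w := hexw.symm
      _ = (e * x * w) * bp * w + e * x * e := by
          conv_lhs => rw [hw']
          noncomm_ring
      _ = e * bp * w + e * x * e := by rw [hexw]
      _ = e * x * e := by rw [hebp, zero_mul, zero_add]
    obtain ⟨u, hu1, hu2⟩ := jac_unit (neg_mem (jac_mul_left x heJ))
    have h0 : e * (1 + -(x * e)) = 0 := by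
      have h : e * (1 + -(x * e)) = e - e * x * e := by noncomm_ring
      rw [h, ← hee, sub_self]
    calc e = e * ((1 + -(x * e)) * u) := by rw [hu1, mul_one]
    _ = (e * (1 + -(x * e))) * u := by rw [mul_assoc]
    _ = 0 := by rw [h0, zero_mul]
  · intro h
    exact ⟨bp, (sub_eq_zero.mp h).symm⟩

lemma reg_unit' {w v u u' : R} (huu' : u * u' = 1) (hu'u : u' * u = 1) (hv : v = w * u) :
    (∃ x, v * x * v = v) ↔ (∃ x, w * x * w = w) := by
  subst hv
  constructor
  · rintro ⟨x, hx⟩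
    refine ⟨u * x, ?_⟩
    calc w * (u * x) * w
        = (w * u) * x * (w * (u * u')) := by rw [huu', mul_one]; noncomm_ring
      _ = ((w * u) * x * (w * u)) * u' := by noncomm_ring
      _ = (w * u) * u' := by rw [hx]
      _ = w := by rw [mul_assoc, huu', mul_one]
  · rintro ⟨x, hx⟩
    refine ⟨u' * x, ?_⟩
    calc (w * u) * (u' * x) * (w * u)
        = (w * (u * u')) * x * w * u := by noncomm_ring
      _ = (w * x * w) * u := by rw [huu', mul_one]
      _ = w * u := by rw [hx]

lemma reg_iff {b bp j : R} (hj : j ∈ 𝕁) (h1 : b * bp * b = b) (h2 : bp * b * bp = bp) :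
    (∃ v, (b + j) * v * (b + j) = b + j) ↔
      (1 - b * bp) * j * Ring.inverse (1 + bp * j) * (1 - bp * b) = 0 := by
  have hu : IsUnit (1 + bp * j) := jac_isUnit (jac_mul_left bp hj)
  set u' := Ring.inverse (1 + bp * j) with hu'def
  have huu' : (1 + bp * j) * u' = 1 := Ring.mul_inverse_cancel _ hu
  have hu'u : u' * (1 + bp * j) = 1 := Ring.inverse_mul_cancel _ hu
  have hfw : b * bp * ((b + j) * u') = b := by
    calc b * bp * ((b + j) * u') = (b * bp * b + b * bp * j) * u' := by noncomm_ring
    _ = (b + b * bp * j) * u' := by rw [h1]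
    _ = b * ((1 + bp * j) * u') := by noncomm_ring
    _ = b := by rw [huu', mul_one]
  have hk : (b + j) * u' - b ∈ 𝕁 := by
    have hkeq : (b + j) * u' - b = ((b + j) - b * (1 + bp * j)) * u' := by
      rw [sub_mul, mul_assoc, huu', mul_one]
    have h2' : (b + j) - b * (1 + bp * j) = j - b * (bp * j) := by noncomm_ring
    rw [hkeq, h2']
    exact jac_mul_right _ (sub_mem hj (jac_mul_left b (jac_mul_left bp hj)))
  have hiff := regA h1 h2 hfw hk
  have hcond1 : (1 - b * bp) * ((b + j) * u') = (1 - b * bp) * j * u' := by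
    have e1 : (1 - b * bp) * ((b + j) * u')
        = ((b + j) - (b * bp * b + b * bp * j)) * u' := by noncomm_ring
    rw [e1, h1]
    noncomm_ring
  have hcond : (1 - b * bp) * ((b + j) * u') * (1 - bp * b)
      = (1 - b * bp) * j * u' * (1 - bp * b) := by rw [hcond1]
  rw [hcond] at hiff
  have hwu : ((b + j) * u') * (1 + bp * j) = b + j := by rw [mul_assoc, hu'u, mul_one]
  exact (reg_unit' huu' hu'u hwu.symm).trans hiff

lemma factor {b bp j u' : R} (h1 : b * bp * b = b)
    (hu'u : u' * (1 + bp * j) = 1)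
    (he : (1 - b * bp) * j * u' * (1 - bp * b) = 0) :
    (1 + (1 - b * bp) * j * u' * bp) * b * (1 + bp * j) = b + j := by
  have he' : (1 - b * bp) * j * u' * (bp * b) = (1 - b * bp) * j * u' := by
    have h : (1 - b * bp) * j * u' * (bp * b)
        = (1 - b * bp) * j * u' - (1 - b * bp) * j * u' * (1 - bp * b) := by noncomm_ring
    rw [h, he, sub_zero]
  calc (1 + (1 - b * bp) * j * u' * bp) * b * (1 + bp * j)
      = b * (1 + bp * j) + ((1 - b * bp) * j * u' * (bp * b)) * (1 + bp * j) := by noncomm_ring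
    _ = b * (1 + bp * j) + ((1 - b * bp) * j * u') * (1 + bp * j) := by rw [he']
    _ = b * (1 + bp * j) + (1 - b * bp) * j * (u' * (1 + bp * j)) := by noncomm_ring
    _ = b * (1 + bp * j) + (1 - b * bp) * j := by rw [hu'u, mul_one]
    _ = b + j := by noncomm_ring

lemma bc_perturb {a b c y j : R} (hj : j ∈ 𝕁)
    (hy : IsBCInverse a b c y) : ∃ z, IsBCInverse (a + j) b c z := by
  obtain ⟨hcay, hyab, ⟨s, hs⟩, ⟨t, ht⟩⟩ := hy
  obtain ⟨v', hv1, hv2⟩ := jac_unit (jac_mul_left y hj)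
  obtain ⟨w', hw1, hw2⟩ := jac_unit (jac_mul_right y hj)
  have hvy : (1 + y * j) * y = y * (1 + j * y) := by noncomm_ring
  have hkey : v' * y = y * w' := by
    calc v' * y = v' * y * ((1 + j * y) * w') := by rw [hw1, mul_one]
    _ = v' * (y * (1 + j * y)) * w' := by noncomm_ring
    _ = v' * ((1 + y * j) * y) * w' := by rw [← hvy]
    _ = (v' * (1 + y * j)) * (y * w') := by noncomm_ring
    _ = y * w' := by rw [hv2, one_mul]
  refine ⟨v' * y, ?_, ?_, ⟨s * w', ?_⟩, ⟨v' * t, ?_⟩⟩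
  · calc c * (a + j) * (v' * y) = c * (a + j) * (y * w') := by rw [hkey]
    _ = (c * a * y + c * (j * y)) * w' := by noncomm_ring
    _ = (c + c * (j * y)) * w' := by rw [hcay]
    _ = c * ((1 + j * y) * w') := by noncomm_ring
    _ = c := by rw [hw1, mul_one]
  · calc (v' * y) * (a + j) * b = v' * (y * a * b + y * (j * b)) := by noncomm_ring
    _ = v' * (b + y * (j * b)) := by rw [hyab]
    _ = (v' * (1 + y * j)) * b := by noncomm_ring
    _ = b := by rw [hv2, one_mul]
  · rw [hkey, hs, mul_assoc]
  · rw [ht, ← mul_assoc]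

lemma bc_units {a' b c z p q r s p' q' r' s' : R}
    (hpp' : p * p' = 1) (hp'p : p' * p = 1) (hqq' : q * q' = 1) (hq'q : q' * q = 1)
    (hrr' : r * r' = 1) (hr'r : r' * r = 1) (hss' : s * s' = 1) (hs's : s' * s = 1)
    (hz : IsBCInverse (s * a' * p) b c z) :
    IsBCInverse a' (p * b * q) (r * c * s) (p * z * s) := by
  obtain ⟨h1, h2, ⟨u, hu⟩, ⟨t, ht⟩⟩ := hz
  refine ⟨?_, ?_, ⟨q' * u * s, ?_⟩, ⟨p * t * r', ?_⟩⟩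
  · calc (r * c * s) * a' * (p * z * s) = r * (c * (s * a' * p) * z) * s := by noncomm_ring
    _ = r * c * s := by rw [h1]
  · calc (p * z * s) * a' * (p * b * q) = p * (z * (s * a' * p) * b) * q := by noncomm_ring
    _ = p * b * q := by rw [h2]
  · calc p * z * s = p * (b * u) * s := by rw [hu]
    _ = (p * b) * (q * q') * (u * s) := by rw [hqq']; noncomm_ring
    _ = (p * b * q) * (q' * u * s) := by noncomm_ring
  · calc p * z * s = p * (t * c) * s := by rw [ht]
    _ = (p * t) * (r' * r) * (c * s) := by rw [hr'r]; noncomm_ring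
    _ = (p * t * r') * (r * c * s) := by noncomm_ring

end BCAux

/-- if `a` is (b,c)-invertible, `b⁺, c⁺` are reflexive inverses of `b, c`
and `j_a, j_b, j_c` are in the Jacobson radical, then the (b+j_b, c+j_c)-invertibility
of `a + j_a` is equivalent to the regularity of `b + j_b` and `c + j_c`, and also to the
two displayed equations. -/
theorem stmt1 {R : Type*} [Ring R] (a b c y bp cp ja jb jc : R)
    (hja : ja ∈ Ideal.jacobson (⊥ : Ideal R))
    (hjb : jb ∈ Ideal.jacobson (⊥ : Ideal R))
    (hjc : jc ∈ Ideal.jacobson (⊥ : Ideal R))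
    (hy : IsBCInverse a b c y)
    (hbp : b * bp * b = b ∧ bp * b * bp = bp)
    (hcp : c * cp * c = c ∧ cp * c * cp = cp) :
    ((∃ z, IsBCInverse (a + ja) (b + jb) (c + jc) z) ↔
      ((∃ u, (b + jb) * u * (b + jb) = b + jb) ∧
       (∃ v, (c + jc) * v * (c + jc) = c + jc))) ∧
    ((∃ z, IsBCInverse (a + ja) (b + jb) (c + jc) z) ↔
      ((1 - b * bp) * jb * Ring.inverse (1 + bp * jb) * (1 - bp * b) = 0 ∧
       (1 - c * cp) * jc * Ring.inverse (1 + cp * jc) * (1 - cp * c) = 0)) := by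
  obtain ⟨hb1, hb2⟩ := hbp
  obtain ⟨hc1, hc2⟩ := hcp
  have hiffb := reg_iff hjb hb1 hb2
  have hiffc := reg_iff hjc hc1 hc2
  have h12 : (∃ z, IsBCInverse (a + ja) (b + jb) (c + jc) z) →
      (∃ u, (b + jb) * u * (b + jb) = b + jb) ∧ (∃ v, (c + jc) * v * (c + jc) = c + jc) := by
    rintro ⟨z, hz1, hz2, ⟨u, hu⟩, ⟨t, ht⟩⟩
    constructor
    · refine ⟨u * (a + ja), ?_⟩
      calc (b + jb) * (u * (a + ja)) * (b + jb)
          = ((b + jb) * u) * (a + ja) * (b + jb) := by noncomm_ring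
        _ = z * (a + ja) * (b + jb) := by rw [← hu]
        _ = b + jb := hz2
    · refine ⟨(a + ja) * t, ?_⟩
      calc (c + jc) * ((a + ja) * t) * (c + jc)
          = (c + jc) * (a + ja) * (t * (c + jc)) := by noncomm_ring
        _ = (c + jc) * (a + ja) * z := by rw [← ht]
        _ = c + jc := hz1
  have h31 : ((1 - b * bp) * jb * Ring.inverse (1 + bp * jb) * (1 - bp * b) = 0 ∧
      (1 - c * cp) * jc * Ring.inverse (1 + cp * jc) * (1 - cp * c) = 0) →
      ∃ z, IsBCInverse (a + ja) (b + jb) (c + jc) z := by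
    rintro ⟨e3b, e3c⟩
    have hub : IsUnit (1 + bp * jb) := jac_isUnit (jac_mul_left bp hjb)
    set ub' := Ring.inverse (1 + bp * jb) with hub'def
    have hub1 : (1 + bp * jb) * ub' = 1 := Ring.mul_inverse_cancel _ hub
    have hub2 : ub' * (1 + bp * jb) = 1 := Ring.inverse_mul_cancel _ hub
    have huc : IsUnit (1 + cp * jc) := jac_isUnit (jac_mul_left cp hjc)
    set uc' := Ring.inverse (1 + cp * jc) with huc'def
    have huc1 : (1 + cp * jc) * uc' = 1 := Ring.mul_inverse_cancel _ huc
    have huc2 : uc' * (1 + cp * jc) = 1 := Ring.inverse_mul_cancel _ huc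
    have hπb : (1 - b * bp) * jb * ub' * bp ∈ Ideal.jacobson (⊥ : Ideal R) :=
      jac_mul_right _ (jac_mul_right _ (jac_mul_left _ hjb))
    have hπc : (1 - c * cp) * jc * uc' * cp ∈ Ideal.jacobson (⊥ : Ideal R) :=
      jac_mul_right _ (jac_mul_right _ (jac_mul_left _ hjc))
    obtain ⟨vb', hvb1, hvb2⟩ := jac_unit hπb
    obtain ⟨vc', hvc1, hvc2⟩ := jac_unit hπc
    have hFb : (1 + (1 - b * bp) * jb * ub' * bp) * b * (1 + bp * jb) = b + jb :=
      factor hb1 hub2 e3b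
    have hFc : (1 + (1 - c * cp) * jc * uc' * cp) * c * (1 + cp * jc) = c + jc :=
      factor hc1 huc2 e3c
    set p := 1 + (1 - b * bp) * jb * ub' * bp with hpdef
    set r := 1 + (1 - c * cp) * jc * uc' * cp with hrdef
    set s := 1 + cp * jc with hsdef
    have hj' : s * (a + ja) * p - a ∈ Ideal.jacobson (⊥ : Ideal R) := by
      have hexp : s * (a + ja) * p - a
          = (cp * jc) * ((a + ja) * p) + ja * p + a * ((1 - b * bp) * jb * ub' * bp) := by
        rw [hpdef, hsdef]; noncomm_ring
      rw [hexp]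
      exact add_mem (add_mem (jac_mul_right _ (jac_mul_left cp hjc))
        (jac_mul_right _ hja)) (jac_mul_left a hπb)
    obtain ⟨z0, hz0⟩ := bc_perturb hj' hy
    have hz0' : IsBCInverse (s * (a + ja) * p) b c z0 := by
      have h : a + (s * (a + ja) * p - a) = s * (a + ja) * p := by abel
      rwa [h] at hz0
    have hfinal := bc_units hvb1 hvb2 hub1 hub2 hvc1 hvc2 huc1 huc2 hz0'
    rw [hFb, hFc] at hfinal
    exact ⟨p * z0 * s, hfinal⟩
  constructor
  · exact ⟨h12, fun ⟨hb, hc⟩ => h31 ⟨hiffb.1 hb, hiffc.1 hc⟩⟩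
  · exact ⟨fun h => ⟨hiffb.1 (h12 h).1, hiffc.1 (h12 h).2⟩, h31⟩
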